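/- Let A be a Banach–Tate ring and let M and N be ONable Banach A-modules with ON bases (e_i)_{i∈I} and (f_j)_{j∈J}. (i) For every continuous A-linear map φ:M→N with matrix (a_{i,j}): for each fixed i∈I one has lim_{j→∞}a_{i,j}=0 (for every ε>0 only finitely many j∈J satisfy |a_{i,j}|>ε); the set {|a_{i,j}|} is bounded; and ‖φ‖=sup_{i∈I,j∈J}|a_{i,j}|. (ii) Conversely, every family (a_{i,j})_{i∈I,j∈J} of elements of A satisfying these two conditions is the matrix of a unique continuous A-linear map φ:M→N, and this φ has norm ‖φ‖=sup_{i,j}|a_{i,j}|. -/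

import Mathlib

open scoped Classical

universe u v w

/-- A (non-archimedean, submultiplicative) ring norm with values in `ℝ`. -/
structure IsRingNorm {A : Type*} [Ring A] (v : A → ℝ) : Prop where
  nonneg : ∀ a, 0 ≤ v a
  eq_zero_iff : ∀ a, v a = 0 ↔ a = 0
  map_one : v 1 = 1
  map_neg : ∀ a, v (-a) = v a
  add_le : ∀ a b, v (a + b) ≤ max (v a) (v b)
  mul_le : ∀ a b, v (a * b) ≤ v a * v b

theorem IsRingNorm.map_zero {A : Type*} [Ring A] {v : A → ℝ} (hv : IsRingNorm v) :
    v 0 = 0 := (hv.eq_zero_iff 0).mpr rfl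

/-- A norm on an `A`-module, compatible with a ring norm `v` on `A`. -/
structure IsModuleNorm {A : Type*} [Ring A] (v : A → ℝ) {M : Type*} [AddCommGroup M]
    [Module A M] (nm : M → ℝ) : Prop where
  nonneg : ∀ m, 0 ≤ nm m
  eq_zero_iff : ∀ m, nm m = 0 ↔ m = 0
  map_neg : ∀ m, nm (-m) = nm m
  add_le : ∀ m n, nm (m + n) ≤ max (nm m) (nm n)
  smul_le : ∀ (a : A) (m : M), nm (a • m) ≤ v a * nm m

/-- A sequence is Cauchy with respect to a norm. -/
def NormCauchy {M : Type*} [AddCommGroup M] (nm : M → ℝ) (s : ℕ → M) : Prop :=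
  ∀ ε : ℝ, 0 < ε → ∃ N : ℕ, ∀ i j : ℕ, N ≤ i → N ≤ j → nm (s i - s j) < ε

/-- A sequence converges to `x` with respect to a norm. -/
def NormLim {M : Type*} [AddCommGroup M] (nm : M → ℝ) (s : ℕ → M) (x : M) : Prop :=
  ∀ ε : ℝ, 0 < ε → ∃ N : ℕ, ∀ i : ℕ, N ≤ i → nm (s i - x) < ε

/-- Completeness: every Cauchy sequence converges. -/
def NormComplete {M : Type*} [AddCommGroup M] (nm : M → ℝ) : Prop :=
  ∀ s : ℕ → M, NormCauchy nm s → ∃ x : M, NormLim nm s x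

/-- Continuity of a map between modules equipped with norms. -/
def NormContinuous {M N : Type*} [AddCommGroup M] [AddCommGroup N]
    (nmM : M → ℝ) (nmN : N → ℝ) (f : M → N) : Prop :=
  ∀ m : M, ∀ ε : ℝ, 0 < ε → ∃ δ : ℝ, 0 < δ ∧
    ∀ m' : M, nmM (m' - m) < δ → nmN (f m' - f m) < ε

/-- A Banach–Tate ring: a complete normed ring containing a multiplicative
topologically nilpotent unit. -/
structure IsBanachTate {A : Type*} [Ring A] (v : A → ℝ) : Prop where
  isRingNorm : IsRingNorm v
  complete : NormComplete v
  exists_unit : ∃ ϖ : A, IsUnit ϖ ∧ v ϖ < 1 ∧ ∀ b, v (ϖ * b) = v ϖ * v b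
/-- `cA v hv I` is the Banach `A`-module `c_A(I)` of functions `I → A` tending to zero:
for every `ε > 0` only finitely many `i` satisfy `v (f i) > ε`. -/
def cA {A : Type u} [Ring A] (v : A → ℝ) (hv : IsRingNorm v) (I : Type v) :
    Submodule A (I → A) where
  carrier := {f | ∀ ε : ℝ, 0 < ε → {i : I | ε < v (f i)}.Finite}
  add_mem' := by
    intro f g hf hg ε hε
    refine ((hf ε hε).union (hg ε hε)).subset ?_
    intro i hi
    simp only [Set.mem_setOf_eq, Pi.add_apply] at hi
    simp only [Set.mem_union, Set.mem_setOf_eq]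
    by_contra hc
    push_neg at hc
    have h := le_trans (hv.add_le (f i) (g i)) (max_le hc.1 hc.2)
    exact absurd hi (not_lt.mpr h)
  zero_mem' := by
    intro ε hε
    have : {i : I | ε < v ((0 : I → A) i)} = ∅ := by
      ext i
      simp only [Set.mem_setOf_eq, Pi.zero_apply, Set.mem_empty_iff_false, iff_false, not_lt,
        hv.map_zero]
      exact le_of_lt hε
    rw [this]; exact Set.finite_empty
  smul_mem' := by
    intro a f hf ε hε
    rcases eq_or_ne a 0 with rfl | ha
    · refine Set.finite_empty.subset ?_
      intro i hi
      simp only [Set.mem_setOf_eq, Pi.smul_apply, zero_smul, hv.map_zero] at hi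
      exact absurd hi (not_lt.mpr (le_of_lt hε))
    · have hva : 0 < v a := by
        rcases lt_or_eq_of_le (hv.nonneg a) with h | h
        · exact h
        · exact absurd ((hv.eq_zero_iff a).mp h.symm) ha
      refine (hf (ε / v a) (div_pos hε hva)).subset ?_
      intro i hi
      simp only [Set.mem_setOf_eq, Pi.smul_apply, smul_eq_mul] at hi
      simp only [Set.mem_setOf_eq]
      rw [div_lt_iff₀ hva]
      calc ε < v (a * f i) := hi
        _ ≤ v a * v (f i) := hv.mul_le a (f i)
        _ = v (f i) * v a := mul_comm _ _

/-- The norm on `c_A(I)`: the supremum (= maximum) of the norms of the values. -/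
noncomputable def cNorm {A : Type u} [Ring A] (v : A → ℝ) {hv : IsRingNorm v} {I : Type v}
    (f : cA v hv I) : ℝ :=
  ⨆ i : I, v ((f : I → A) i)

/-- The canonical `i`-th basis vector `e_i` of `c_A(I)`. -/
noncomputable def stdDelta {A : Type u} [Ring A] (v : A → ℝ) (hv : IsRingNorm v) {I : Type v} (i : I) :
    cA v hv I :=
  ⟨fun j => if j = i then 1 else 0, by
    intro ε hε
    refine (Set.finite_singleton i).subset ?_
    intro j hj
    simp only [Set.mem_setOf_eq] at hj
    simp only [Set.mem_singleton_iff]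
    by_contra hji
    rw [if_neg hji, hv.map_zero] at hj
    exact absurd hj (not_lt.mpr (le_of_lt hε))⟩
/-- A linear map has finite rank if its image is contained in a finitely generated
submodule of the target. -/
def FiniteRank {A : Type u} [Ring A] {M : Type v} {N : Type w} [AddCommGroup M] [Module A M]
    [AddCommGroup N] [Module A N] (f : M →ₗ[A] N) : Prop :=
  ∃ P : Submodule A N, P.FG ∧ LinearMap.range f ≤ P

/-- A continuous linear map is compact if it is a limit, in the operator norm, of
continuous finite rank maps. -/
def IsCompactOp {A : Type u} [Ring A] {M : Type v} {N : Type w} [AddCommGroup M] [Module A M]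
    [AddCommGroup N] [Module A N] (nmM : M → ℝ) (nmN : N → ℝ) (f : M →ₗ[A] N) : Prop :=
  NormContinuous nmM nmN f ∧
  ∀ ε : ℝ, 0 < ε → ∃ g : M →ₗ[A] N, NormContinuous nmM nmN g ∧ FiniteRank g ∧
    ∀ m : M, nmN (f m - g m) ≤ ε * nmM m

/-- The matrix coefficients `a_{i,j}` of a linear map `f : M → N`, with respect to
ON bases of `M` and `N` given by isomorphisms with `c_A(I)` and `c_A(J)`:
`f(e_i) = Σ_j a_{i,j} f_j`. -/
noncomputable def matrixCoef {A : Type u} [Ring A] (v : A → ℝ) (hv : IsRingNorm v)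
    {I : Type v} {J : Type v} {M N : Type v} [AddCommGroup M] [Module A M]
    [AddCommGroup N] [Module A N]
    (TM : M ≃ₗ[A] cA v hv I) (TN : N ≃ₗ[A] cA v hv J)
    (f : M →ₗ[A] N) (i : I) (j : J) : A :=
  ((TN (f (TM.symm (stdDelta v hv i))) : cA v hv J) : J → A) j

/-- The projection of `c_A(I)` onto the coordinates in a finite set `S`. -/
noncomputable def projCA {A : Type u} [Ring A] (v : A → ℝ) (hv : IsRingNorm v) {I : Type v}
    (S : Finset I) : cA v hv I →ₗ[A] cA v hv I where
  toFun f := ⟨fun i => if i ∈ S then (f : I → A) i else 0, by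
    intro ε hε
    refine (f.2 ε hε).subset ?_
    intro i hi
    simp only [Set.mem_setOf_eq] at hi ⊢
    by_cases h : i ∈ S
    · rwa [if_pos h] at hi
    · rw [if_neg h, hv.map_zero] at hi
      exact absurd hi (not_lt.mpr (le_of_lt hε))⟩
  map_add' f g := by
    apply Subtype.ext
    funext i
    by_cases h : i ∈ S <;> simp [h]
  map_smul' a f := by
    apply Subtype.ext
    funext i
    by_cases h : i ∈ S <;> simp [h]

/-- The projection `π_S : M → M` of an ONable Banach module onto the span of the
basis vectors indexed by a finite set `S`. -/
noncomputable def projON {A : Type u} [Ring A] (v : A → ℝ) (hv : IsRingNorm v)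
    {I : Type v} {M : Type v} [AddCommGroup M] [Module A M]
    (T : M ≃ₗ[A] cA v hv I) (S : Finset I) : M →ₗ[A] M :=
  T.symm.toLinearMap ∘ₗ projCA v hv S ∘ₗ T.toLinearMap

/-- The operator norm `‖φ‖ = sup_{m ≠ 0} ‖φ(m)‖ / ‖m‖` of a map between normed
modules. -/
noncomputable def opNorm {M N : Type*} [AddCommGroup M] [AddCommGroup N]
    (nmM : M → ℝ) (nmN : N → ℝ) (f : M → N) : ℝ :=
  sSup {r : ℝ | ∃ m : M, m ≠ 0 ∧ r = nmN (f m) / nmM m}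

section Helpers

variable {A : Type u} [Ring A] {v : A → ℝ}

theorem IsModuleNorm.map_zero' {M : Type*} [AddCommGroup M] [Module A M] {nm : M → ℝ}
    (h : IsModuleNorm v nm) : nm 0 = 0 := (h.eq_zero_iff 0).mpr rfl

theorem IsModuleNorm.sub_comm {M : Type*} [AddCommGroup M] [Module A M] {nm : M → ℝ}
    (h : IsModuleNorm v nm) (x y : M) : nm (x - y) = nm (y - x) := by
  rw [← h.map_neg (x - y), neg_sub]

theorem IsModuleNorm.le_max_sub {M : Type*} [AddCommGroup M] [Module A M] {nm : M → ℝ}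
    (h : IsModuleNorm v nm) (x y : M) : nm x ≤ max (nm (x - y)) (nm y) := by
  have := h.add_le (x - y) y
  rwa [sub_add_cancel] at this

theorem IsModuleNorm.sum_le {M : Type*} [AddCommGroup M] [Module A M] {nm : M → ℝ}
    (h : IsModuleNorm v nm) {ι : Type*} (S : Finset ι) (f : ι → M) {B : ℝ} (hB : 0 ≤ B)
    (hf : ∀ i ∈ S, nm (f i) ≤ B) : nm (∑ i ∈ S, f i) ≤ B := by
  classical
  induction S using Finset.induction with
  | empty => simpa [h.map_zero'] using hB
  | @insert a S hx ih =>
    rw [Finset.sum_insert hx]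
    refine le_trans (h.add_le _ _) (max_le (hf a (Finset.mem_insert_self a S)) ?_)
    exact ih fun i hi => hf i (Finset.mem_insert_of_mem hi)

theorem IsModuleNorm.sub_le {M : Type*} [AddCommGroup M] [Module A M] {nm : M → ℝ}
    (h : IsModuleNorm v nm) (x y : M) : nm (x - y) ≤ max (nm x) (nm y) := by
  rw [sub_eq_add_neg]
  refine le_trans (h.add_le _ _) ?_
  rw [h.map_neg]

theorem le_of_forall_le_max {x b : ℝ} (hb : 0 ≤ b) (h : ∀ δ : ℝ, 0 < δ → x ≤ max b δ) :
    x ≤ b := by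
  refine le_of_forall_pos_le_add fun δ hδ => ?_
  exact (h δ hδ).trans (max_le (le_add_of_nonneg_right hδ.le) (le_add_of_nonneg_left hb))

end Helpers
section CNormLemmas

variable {A : Type u} [Ring A] {v : A → ℝ} {hv : IsRingNorm v} {I : Type v}

theorem cA_bddAbove (f : cA v hv I) : BddAbove (Set.range fun i => v ((f : I → A) i)) := by
  classical
  have hfin := f.2 1 one_pos
  by_cases hne : hfin.toFinset.Nonempty
  · refine ⟨max 1 (hfin.toFinset.sup' hne fun i => v ((f : I → A) i)), ?_⟩
    rintro x ⟨i, rfl⟩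
    by_cases hi : 1 < v ((f : I → A) i)
    · exact le_max_of_le_right (Finset.le_sup' (fun i => v ((f : I → A) i))
        (show i ∈ hfin.toFinset by simpa [Set.Finite.mem_toFinset] using hi))
    · exact le_max_of_le_left (not_lt.mp hi)
  · refine ⟨1, ?_⟩
    rintro x ⟨i, rfl⟩
    by_contra hlt
    exact hne ⟨i, by simpa [Set.Finite.mem_toFinset] using not_le.mp hlt⟩

theorem v_le_cNorm (f : cA v hv I) (i : I) : v ((f : I → A) i) ≤ cNorm v f :=
  le_ciSup (cA_bddAbove f) i

theorem cNorm_le (f : cA v hv I) {B : ℝ} (hB : 0 ≤ B)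
    (h : ∀ i, v ((f : I → A) i) ≤ B) : cNorm v f ≤ B :=
  Real.iSup_le h hB

theorem cNorm_nonneg (f : cA v hv I) : 0 ≤ cNorm v f := by
  cases isEmpty_or_nonempty I with
  | inl h => simp [cNorm, Real.iSup_of_isEmpty]
  | inr h => exact le_trans ((hv.nonneg _)) (v_le_cNorm f (Classical.arbitrary I))

theorem one_ne_zero_of_ringNorm (hv : IsRingNorm v) : (1 : A) ≠ 0 := by
  intro h
  have := hv.map_one
  rw [h, hv.map_zero] at this
  exact one_ne_zero this.symm

theorem cNorm_stdDelta (hv : IsRingNorm v) (i : I) : cNorm v (stdDelta v hv i) = 1 := by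
  refine le_antisymm (cNorm_le _ zero_le_one fun k => ?_) ?_
  · show v (if k = i then 1 else 0) ≤ 1
    split
    · exact le_of_eq hv.map_one
    · rw [hv.map_zero]; exact zero_le_one
  · have := v_le_cNorm (stdDelta v hv i) i
    simpa [stdDelta, hv.map_one] using this

theorem stdDelta_ne_zero (hv : IsRingNorm v) (i : I) : stdDelta v hv i ≠ 0 := by
  intro h
  have : ((stdDelta v hv i : cA v hv I) : I → A) i = 0 := by rw [h]; rfl
  simp only [stdDelta, if_pos rfl] at this
  exact one_ne_zero_of_ringNorm hv this

end CNormLemmas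
section TateLemmas

variable {A : Type u} [Ring A] {v : A → ℝ}

theorem vmul_pow {ϖ : A} (hmul : ∀ b, v (ϖ * b) = v ϖ * v b) :
    ∀ n : ℕ, ∀ b, v (ϖ ^ n * b) = v ϖ ^ n * v b := by
  intro n
  induction n with
  | zero => intro b; simp
  | succ n ih =>
    intro b
    rw [pow_succ, mul_assoc, ih, hmul, pow_succ]
    ring

theorem vmul_inv (u : Aˣ) (hmul : ∀ b, v ((u : A) * b) = v (u : A) * v b)
    (hq : 0 < v (u : A)) : ∀ b, v ((↑u⁻¹ : A) * b) = (v (u : A))⁻¹ * v b := by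
  intro b
  have h : v ((u : A) * ((↑u⁻¹ : A) * b)) = v b := by
    rw [← mul_assoc, Units.mul_inv, one_mul]
  rw [hmul] at h
  rw [inv_mul_eq_div, eq_div_iff hq.ne']
  linarith [h]

theorem vmul_zpow (hv : IsRingNorm v) (u : Aˣ)
    (hmul : ∀ b, v ((u : A) * b) = v (u : A) * v b)
    (hq : 0 < v (u : A)) : ∀ n : ℤ, ∀ b, v ((↑(u ^ n) : A) * b) = (v (u : A)) ^ n * v b := by
  intro n b
  cases n with
  | ofNat k =>
    rw [Int.ofNat_eq_coe, zpow_natCast, Units.val_pow_eq_pow_val, zpow_natCast]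
    exact vmul_pow hmul k b
  | negSucc k =>
    rw [zpow_negSucc, ← inv_pow, Units.val_pow_eq_pow_val, zpow_negSucc]
    have hinv := vmul_inv u hmul hq
    have hval : v (↑u⁻¹ : A) = (v (u : A))⁻¹ := by
      have h1 := hinv 1
      rwa [mul_one, hv.map_one, mul_one] at h1
    simp only [← hval] at hinv
    rw [vmul_pow hinv (k + 1) b, hval, ← inv_pow]

theorem v_zpow_val (hv : IsRingNorm v) (u : Aˣ)
    (hmul : ∀ b, v ((u : A) * b) = v (u : A) * v b)
    (hq : 0 < v (u : A)) (n : ℤ) : v ((↑(u ^ n) : A)) = (v (u : A)) ^ n := by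
  have := vmul_zpow hv u hmul hq n 1
  rwa [mul_one, hv.map_one, mul_one] at this

variable {M : Type w} [AddCommGroup M] [Module A M] {nm : M → ℝ}

theorem nm_unit_smul (hv : IsRingNorm v) (hnm : IsModuleNorm v nm) (u : Aˣ)
    (hmul : ∀ b, v ((u : A) * b) = v (u : A) * v b) (hq : 0 < v (u : A)) (x : M) :
    nm ((u : A) • x) = v (u : A) * nm x := by
  refine le_antisymm (hnm.smul_le _ _) ?_
  have hval : v (↑u⁻¹ : A) = (v (u : A))⁻¹ := by
    have h1 := vmul_inv u hmul hq 1
    rwa [mul_one, hv.map_one, mul_one] at h1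
  have h2 : nm x ≤ (v (u : A))⁻¹ * nm ((u : A) • x) := by
    have h3 : (↑u⁻¹ : A) • ((u : A) • x) = x := by
      rw [smul_smul, Units.inv_mul, one_smul]
    calc nm x = nm ((↑u⁻¹ : A) • ((u : A) • x)) := by rw [h3]
      _ ≤ v (↑u⁻¹ : A) * nm ((u : A) • x) := hnm.smul_le _ _
      _ = (v (u : A))⁻¹ * nm ((u : A) • x) := by rw [hval]
  calc v (u : A) * nm x ≤ v (u : A) * ((v (u : A))⁻¹ * nm ((u : A) • x)) :=
        mul_le_mul_of_nonneg_left h2 hq.le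
    _ = nm ((u : A) • x) := by rw [← mul_assoc, mul_inv_cancel₀ hq.ne', one_mul]

theorem nm_zpow_smul (hv : IsRingNorm v) (hnm : IsModuleNorm v nm) (u : Aˣ)
    (hmul : ∀ b, v ((u : A) * b) = v (u : A) * v b) (hq : 0 < v (u : A)) (n : ℤ) (x : M) :
    nm ((↑(u ^ n) : A) • x) = (v (u : A)) ^ n * nm x := by
  have hvn := v_zpow_val hv u hmul hq n
  have hmuln : ∀ b, v ((↑(u ^ n) : A) * b) = v ((↑(u ^ n) : A)) * v b := by
    intro b
    rw [vmul_zpow hv u hmul hq n b, hvn]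
  have hqn : 0 < v ((↑(u ^ n) : A)) := by rw [hvn]; exact zpow_pos hq n
  rw [nm_unit_smul hv hnm (u ^ n) hmuln hqn x, hvn]

end TateLemmas

section Bounded

variable {A : Type u} [Ring A] {v : A → ℝ}
variable {M : Type u} {N : Type u} [AddCommGroup M] [Module A M] [AddCommGroup N] [Module A N]
variable {nmM : M → ℝ} {nmN : N → ℝ}

theorem bounded_of_normContinuous (hA : IsBanachTate v) (hnmM : IsModuleNorm v nmM)
    (hnmN : IsModuleNorm v nmN) (φ : M →ₗ[A] N) (hφ : NormContinuous nmM nmN φ) :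
    ∃ C : ℝ, 0 ≤ C ∧ ∀ m, nmN (φ m) ≤ C * nmM m := by
  obtain ⟨ϖ, huϖ, hq1, hmulϖ⟩ := hA.exists_unit
  set u := huϖ.unit with hu_def
  have huv : (u : A) = ϖ := huϖ.unit_spec
  have hmul : ∀ b, v ((u : A) * b) = v (u : A) * v b := by rw [huv]; exact hmulϖ
  set q := v (u : A) with hq_def
  have hq1' : q < 1 := by rw [hq_def, huv]; exact hq1
  have hone : v (1 : A) = 1 := hA.isRingNorm.map_one
  have hq0 : 0 < q := by
    rcases lt_or_eq_of_le (hA.isRingNorm.nonneg (u : A)) with h | h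
    · exact h
    · exfalso
      have hz : (u : A) = 0 := (hA.isRingNorm.eq_zero_iff _).mp h.symm
      have h1 : (u : A) * (↑u⁻¹ : A) = 1 := Units.mul_inv u
      rw [hz, zero_mul] at h1
      have := hone
      rw [← h1, hA.isRingNorm.map_zero] at this
      exact one_ne_zero this.symm
  obtain ⟨δ, hδ, H⟩ := hφ 0 1 one_pos
  refine ⟨(q * δ)⁻¹, inv_nonneg.mpr (by positivity), fun m => ?_⟩
  by_cases hm : m = 0
  · subst hm
    rw [map_zero, hnmN.map_zero', hnmM.map_zero', mul_zero]
  · set r := nmM m with hr_def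
    have hr : 0 < r := by
      rcases lt_or_eq_of_le (hnmM.nonneg m) with h | h
      · exact h
      · exact absurd ((hnmM.eq_zero_iff m).mp h.symm) hm
    obtain ⟨n, h1, h2⟩ := exists_mem_Ico_zpow (x := r / δ) (y := q⁻¹)
      (div_pos hr hδ) ((one_lt_inv₀ hq0).mpr hq1')
    set k : ℤ := n + 1 with hk_def
    have hqk : (0:ℝ) < q ^ k := zpow_pos hq0 k
    have hqn : (0:ℝ) < q ^ n := zpow_pos hq0 n
    rw [inv_zpow] at h1 h2
    -- h1 : (q ^ n)⁻¹ ≤ r / δ ; h2 : r / δ < (q ^ (n+1))⁻¹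
    have key1 : q ^ k * r < δ := by
      rw [div_lt_iff₀ hδ] at h2
      have := mul_lt_mul_of_pos_left h2 hqk
      calc q ^ k * r < q ^ k * ((q ^ k)⁻¹ * δ) := this
        _ = δ := by rw [← mul_assoc, mul_inv_cancel₀ hqk.ne', one_mul]
    have key2 : q * δ ≤ q ^ k * r := by
      rw [le_div_iff₀ hδ] at h1
      -- h1 : (q ^ n)⁻¹ * δ ≤ r
      have e1 : q ^ k = q ^ n * q := zpow_add_one₀ hq0.ne' n
      calc q * δ = q ^ n * q * ((q ^ n)⁻¹ * δ) := by
            field_simp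
        _ ≤ q ^ n * q * r := mul_le_mul_of_nonneg_left h1 (by positivity)
        _ = q ^ k * r := by rw [e1]
    have hsm : nmM ((↑(u ^ k) : A) • m) = q ^ k * r :=
      nm_zpow_smul hA.isRingNorm hnmM u hmul hq0 k m
    have hlt : nmM ((↑(u ^ k) : A) • m - 0) < δ := by
      rw [sub_zero, hsm]; exact key1
    have hH := H _ hlt
    rw [map_zero, sub_zero, map_smul] at hH
    have hsm2 : nmN ((↑(u ^ k) : A) • φ m) = q ^ k * nmN (φ m) :=
      nm_zpow_smul hA.isRingNorm hnmN u hmul hq0 k (φ m)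
    rw [hsm2] at hH
    -- hH : q ^ k * nmN (φ m) < 1
    have step : nmN (φ m) ≤ (q ^ k)⁻¹ := by
      have h3 := mul_le_mul_of_nonneg_left hH.le (inv_nonneg.mpr hqk.le)
      rwa [← mul_assoc, inv_mul_cancel₀ hqk.ne', one_mul, mul_one] at h3
    have hqδ : (0:ℝ) < q * δ := by positivity
    have i1 : (q ^ k * r)⁻¹ ≤ (q * δ)⁻¹ := inv_anti₀ hqδ key2
    have i2 : (q ^ k)⁻¹ = r * (q ^ k * r)⁻¹ := by field_simp
    calc nmN (φ m) ≤ (q ^ k)⁻¹ := step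
      _ = r * (q ^ k * r)⁻¹ := i2
      _ ≤ r * (q * δ)⁻¹ := mul_le_mul_of_nonneg_left i1 hr.le
      _ = (q * δ)⁻¹ * r := mul_comm _ _

end Bounded
section ContOfBounded

variable {A : Type u} [Ring A] {v : A → ℝ}
variable {M : Type u} {N : Type u} [AddCommGroup M] [Module A M] [AddCommGroup N] [Module A N]
variable {nmM : M → ℝ} {nmN : N → ℝ}

theorem normContinuous_of_bounded (hnmN : IsModuleNorm v nmN) (φ : M →ₗ[A] N) {C : ℝ}
    (hC : 0 ≤ C) (h : ∀ m, nmN (φ m) ≤ C * nmM m) : NormContinuous nmM nmN φ := by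
  intro m ε hε
  refine ⟨ε / (C + 1), by positivity, fun m' hm' => ?_⟩
  have heq : φ m' - φ m = φ (m' - m) := (map_sub φ m' m).symm
  rw [heq]
  calc nmN (φ (m' - m)) ≤ C * nmM (m' - m) := h _
    _ ≤ C * (ε / (C + 1)) := mul_le_mul_of_nonneg_left hm'.le hC
    _ < ε := by
        rw [mul_div_assoc'] at *
        rw [div_lt_iff₀ (by positivity : (0:ℝ) < C + 1)]
        nlinarith

end ContOfBounded
section Construction

set_option maxHeartbeats 2000000 in
theorem matrix_construction
    {A : Type u} [Ring A] (v : A → ℝ) (hA : IsBanachTate v)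
    {M N : Type u} [AddCommGroup M] [Module A M] [AddCommGroup N] [Module A N]
    (nmM : M → ℝ) (hnmM : IsModuleNorm v nmM)
    (nmN : N → ℝ) (hnmN : IsModuleNorm v nmN) (hcompN : NormComplete nmN)
    {I J : Type u}
    (TM : M ≃ₗ[A] cA v hA.isRingNorm I) (hTM : ∀ m : M, nmM m = cNorm v (TM m))
    (TN : N ≃ₗ[A] cA v hA.isRingNorm J) (hTN : ∀ x : N, nmN x = cNorm v (TN x))
    (a : I → J → A)
    (hdecay : ∀ i : I, ∀ ε : ℝ, 0 < ε → {j : J | ε < v (a i j)}.Finite)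
    (C : ℝ) (hC0 : 0 ≤ C) (hC : ∀ i j, v (a i j) ≤ C) :
    ∃ φ : M →ₗ[A] N,
      (∀ m, nmN (φ m) ≤ (⨆ p : I × J, v (a p.1 p.2)) * nmM m) ∧
      (∀ i j, matrixCoef v hA.isRingNorm TM TN φ i j = a i j) ∧
      (∀ ψ : M →ₗ[A] N, NormContinuous nmM nmN ψ →
        (∀ i j, matrixCoef v hA.isRingNorm TM TN ψ i j = a i j) → ∀ m, ψ m = φ m) := by
  classical
  have hv := hA.isRingNorm
  set g : I → N := fun i => TN.symm ⟨fun j => a i j, hdecay i⟩ with hg_def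
  have hgle : ∀ (C0 : ℝ), (0 ≤ C0) → (∀ i j, v (a i j) ≤ C0) → ∀ i, nmN (g i) ≤ C0 := by
    intro C0 hC00 hC0b i
    rw [hTN, hg_def, LinearEquiv.apply_symm_apply]
    exact cNorm_le _ hC00 (hC0b i)
  set cstar : ℝ := ⨆ p : I × J, v (a p.1 p.2) with hcstar_def
  have hbddIJ : BddAbove (Set.range fun p : I × J => v (a p.1 p.2)) := by
    refine ⟨C, ?_⟩
    rintro x ⟨p, rfl⟩
    exact hC p.1 p.2
  have hcstar0 : 0 ≤ cstar := Real.iSup_nonneg fun p => hv.nonneg _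
  have hcstarb : ∀ i j, v (a i j) ≤ cstar := fun i j => le_ciSup hbddIJ (i, j)
  set coefs : M → I → A := fun m i => ((TM m : cA v hv I) : I → A) i with hcoefs_def
  set F : M → Finset I → N := fun m S => ∑ i ∈ S, coefs m i • g i with hF_def
  -- membership finsets
  have hfin : ∀ (m : M) (ε : ℝ), 0 < ε → {i : I | ε < v (coefs m i)}.Finite :=
    fun m ε hε => (TM m).2 ε hε
  -- difference bound
  have hF_half : ∀ (C0 : ℝ), 0 ≤ C0 → (∀ i, nmN (g i) ≤ C0) →
      ∀ (m : M) (ε : ℝ), 0 < ε → ∀ S T : Finset I, T ⊆ S →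
      (∀ i ∈ S \ T, v (coefs m i) ≤ ε) → nmN (F m S - F m T) ≤ ε * C0 := by
    intro C0 hC00 hg0 m ε hε S T hTS hsmall
    have hsum : F m S - F m T = ∑ i ∈ S \ T, coefs m i • g i := by
      rw [hF_def]
      simp only
      rw [← Finset.sum_sdiff hTS]
      abel
    rw [hsum]
    refine hnmN.sum_le _ _ (by positivity) fun i hi => ?_
    refine le_trans (hnmN.smul_le _ _) ?_
    exact mul_le_mul (hsmall i hi) (hg0 i) (hnmN.nonneg _) hε.le
  have hF_diff : ∀ (C0 : ℝ), 0 ≤ C0 → (∀ i, nmN (g i) ≤ C0) →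
      ∀ (m : M) (ε : ℝ), 0 < ε → ∀ S T : Finset I,
      (∀ i, ε < v (coefs m i) → i ∈ S) → (∀ i, ε < v (coefs m i) → i ∈ T) →
      nmN (F m S - F m T) ≤ ε * C0 := by
    intro C0 hC00 hg0 m ε hε S T hS hT
    have h1 : nmN (F m S - F m (S ∩ T)) ≤ ε * C0 := by
      refine hF_half C0 hC00 hg0 m ε hε S (S ∩ T) Finset.inter_subset_left fun i hi => ?_
      rw [Finset.mem_sdiff, Finset.mem_inter] at hi
      by_contra hlt
      exact hi.2 ⟨hi.1, hT i (not_le.mp hlt)⟩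
    have h2 : nmN (F m T - F m (S ∩ T)) ≤ ε * C0 := by
      refine hF_half C0 hC00 hg0 m ε hε T (S ∩ T) Finset.inter_subset_right fun i hi => ?_
      rw [Finset.mem_sdiff, Finset.mem_inter] at hi
      by_contra hlt
      exact hi.2 ⟨hS i (not_le.mp hlt), hi.1⟩
    have hd : F m S - F m T = (F m S - F m (S ∩ T)) + (F m (S ∩ T) - F m T) := by abel
    rw [hd]
    refine le_trans (hnmN.add_le _ _) (max_le h1 ?_)
    rw [hnmN.sub_comm]
    exact h2
  -- the approximating finite sets
  have hpos : ∀ n : ℕ, (0:ℝ) < 1 / (n + 1) := fun n => by positivity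
  set Sfin : M → ℕ → Finset I := fun m n => (hfin m (1 / (n + 1)) (hpos n)).toFinset
    with hSfin_def
  have hSfin_mem : ∀ (m : M) (n : ℕ) (i : I), (1 / (n + 1) : ℝ) < v (coefs m i) →
      i ∈ Sfin m n := by
    intro m n i hi
    rw [hSfin_def]
    simp only [Set.Finite.mem_toFinset, Set.mem_setOf_eq]
    exact hi
  have hmono : ∀ (n n' : ℕ), n ≤ n' → (1 / (n' + 1) : ℝ) ≤ 1 / (n + 1) := by
    intro n n' h
    apply one_div_le_one_div_of_le (by positivity)
    have : (n:ℝ) ≤ n' := Nat.cast_le.mpr h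
    linarith
  have seq_cauchy : ∀ m : M, NormCauchy nmN (fun n => F m (Sfin m n)) := by
    intro m ε hε
    obtain ⟨Nn, hNn⟩ := exists_nat_gt (C / ε)
    refine ⟨Nn, fun p q hp hq => ?_⟩
    have hb := hF_diff C hC0 (hgle C hC0 hC) m (1 / (Nn + 1)) (hpos Nn)
      (Sfin m p) (Sfin m q)
      (fun i hi => hSfin_mem m p i (lt_of_le_of_lt (hmono Nn p hp) hi))
      (fun i hi => hSfin_mem m q i (lt_of_le_of_lt (hmono Nn q hq) hi))
    refine lt_of_le_of_lt hb ?_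
    rw [div_mul_eq_mul_div, one_mul, div_lt_iff₀ (by positivity : (0:ℝ) < (Nn:ℝ) + 1)]
    rw [div_lt_iff₀ hε] at hNn
    nlinarith [hε.le]
  have hex : ∀ m : M, ∃ x : N, NormLim nmN (fun n => F m (Sfin m n)) x :=
    fun m => hcompN _ (seq_cauchy m)
  choose phi0 hlim using hex
  -- the approximation property
  have approx : ∀ (C0 : ℝ), 0 ≤ C0 → (∀ i j, v (a i j) ≤ C0) →
      ∀ (m : M) (ε : ℝ), 0 < ε → ∀ T : Finset I,
      (∀ i, ε < v (coefs m i) → i ∈ T) → nmN (F m T - phi0 m) ≤ ε * C0 := by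
    intro C0 hC00 hC0b m ε hε T hT
    refine le_of_forall_le_max (by positivity) fun δ hδ => ?_
    obtain ⟨N1, hN1⟩ := hlim m δ hδ
    obtain ⟨N2, hN2⟩ := exists_nat_gt (1 / ε)
    set n := max N1 N2 with hn_def
    have h1n : (1 / (n + 1) : ℝ) ≤ ε := by
      rw [div_le_iff₀ (by positivity : (0:ℝ) < (n:ℝ) + 1)]
      rw [div_lt_iff₀ hε] at hN2
      have : (N2:ℝ) ≤ n := Nat.cast_le.mpr (le_max_right N1 N2)
      nlinarith [hε.le]
    have hd1 : nmN (F m T - F m (Sfin m n)) ≤ ε * C0 :=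
      hF_diff C0 hC00 (hgle C0 hC00 hC0b) m ε hε T (Sfin m n) hT
        (fun i hi => hSfin_mem m n i (lt_of_le_of_lt h1n hi))
    have hd2 : nmN (F m (Sfin m n) - phi0 m) < δ := hN1 n (le_max_left N1 N2)
    have hsplit : F m T - phi0 m =
        (F m T - F m (Sfin m n)) + (F m (Sfin m n) - phi0 m) := by abel
    rw [hsplit]
    exact le_trans (hnmN.add_le _ _) (max_le_max hd1 hd2.le)
  -- vanishing criterion
  have vanish : ∀ x : N, (∀ ε : ℝ, 0 < ε → nmN x ≤ ε) → x = 0 := by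
    intro x h
    refine (hnmN.eq_zero_iff x).mp (le_antisymm ?_ (hnmN.nonneg x))
    refine le_of_forall_pos_le_add fun ε hε => ?_
    rw [zero_add]
    exact h ε hε
  have approx' : ∀ (m : M) (δ : ℝ), 0 < δ → ∀ T : Finset I,
      (∀ i, δ / (C + 1) < v (coefs m i) → i ∈ T) → nmN (F m T - phi0 m) ≤ δ := by
    intro m δ hδ T hT
    have h := approx C hC0 hC m (δ / (C + 1)) (by positivity) T hT
    refine le_trans h ?_
    rw [div_mul_eq_mul_div, div_le_iff₀ (by positivity : (0:ℝ) < C + 1)]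
    nlinarith [hδ.le]
  -- linearity
  have hzero : phi0 0 = 0 := by
    have h := vanish (phi0 0) fun δ hδ => ?_
    · rw [← h]
    · have happ := approx' 0 δ hδ ∅ fun i hi => ?_
      · have hF0 : F (0 : M) ∅ = 0 := by rw [hF_def]; simp
        rw [hF0, zero_sub, hnmN.map_neg] at happ
        exact happ
      · exfalso
        have hc0 : coefs (0 : M) i = 0 := by
          rw [hcoefs_def]
          simp only [map_zero]
          rfl
        rw [hc0, hv.map_zero] at hi
        exact absurd hi (not_lt.mpr (by positivity))
  have hcoefs_add : ∀ (m m' : M) (i : I), coefs (m + m') i = coefs m i + coefs m' i := by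
    intro m m' i
    rw [hcoefs_def]
    simp only [map_add]
    rfl
  have hcoefs_smul : ∀ (c : A) (m : M) (i : I), coefs (c • m) i = c * coefs m i := by
    intro c m i
    rw [hcoefs_def]
    simp only [map_smul]
    rfl
  have hadd : ∀ m m', phi0 (m + m') = phi0 m + phi0 m' := by
    intro m m'
    have h := vanish (phi0 (m + m') - (phi0 m + phi0 m')) fun δ hδ => ?_
    · exact sub_eq_zero.mp h
    · set ε := δ / (C + 1) with hε_def
      have hε : 0 < ε := by rw [hε_def]; positivity
      set T := (hfin m ε hε).toFinset ∪ (hfin m' ε hε).toFinset ∪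
        (hfin (m + m') ε hε).toFinset with hT_def
      have hmem : ∀ (x : M), (hfin x ε hε).toFinset ⊆ T →
          ∀ i, ε < v (coefs x i) → i ∈ T := by
        intro x hx i hi
        exact hx (by simp only [Set.Finite.mem_toFinset, Set.mem_setOf_eq]; exact hi)
      have h1 := approx' (m + m') δ hδ T
        (hmem _ (Finset.subset_union_right) )
      have h2 := approx' m δ hδ T
        (hmem _ ((Finset.subset_union_left).trans Finset.subset_union_left))
      have h3 := approx' m' δ hδ T
        (hmem _ ((Finset.subset_union_right).trans Finset.subset_union_left))
      have hFadd : F (m + m') T = F m T + F m' T := by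
        rw [hF_def]
        simp only [hcoefs_add, add_smul, Finset.sum_add_distrib]
      have hsplit : phi0 (m + m') - (phi0 m + phi0 m') =
          (phi0 (m + m') - F (m + m') T) +
            ((F m T - phi0 m) + (F m' T - phi0 m')) := by
        rw [hFadd]; abel
      rw [hsplit]
      refine le_trans (hnmN.add_le _ _) (max_le ?_ (le_trans (hnmN.add_le _ _)
        (max_le h2 h3)))
      rw [hnmN.sub_comm]
      exact h1
  have hsmul : ∀ (c : A) (m : M), phi0 (c • m) = c • phi0 m := by
    intro c m
    rcases eq_or_ne c 0 with rfl | hc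
    · rw [zero_smul, zero_smul, hzero]
    · have hvc : 0 < v c := by
        rcases lt_or_eq_of_le (hv.nonneg c) with h | h
        · exact h
        · exact absurd ((hv.eq_zero_iff c).mp h.symm) hc
      have h := vanish (phi0 (c • m) - c • phi0 m) fun δ hδ => ?_
      · exact sub_eq_zero.mp h
      · set ε1 := δ / (C + 1) with hε1_def
        have hε1 : 0 < ε1 := by rw [hε1_def]; positivity
        set ε2 := ε1 / v c with hε2_def
        have hε2 : 0 < ε2 := by rw [hε2_def]; positivity
        set T := (hfin (c • m) ε1 hε1).toFinset ∪ (hfin m ε2 hε2).toFinset with hT_def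
        have h1 : nmN (F (c • m) T - phi0 (c • m)) ≤ δ := by
          refine approx' (c • m) δ hδ T fun i hi => ?_
          refine Finset.mem_union_left _ ?_
          simp only [Set.Finite.mem_toFinset, Set.mem_setOf_eq]
          exact hi
        have h2 : nmN (F m T - phi0 m) ≤ ε2 * C := by
          refine approx C hC0 hC m ε2 hε2 T fun i hi => ?_
          refine Finset.mem_union_right _ ?_
          simp only [Set.Finite.mem_toFinset, Set.mem_setOf_eq]
          exact hi
        have hFsmul : F (c • m) T = c • F m T := by
          rw [hF_def]
          simp only [hcoefs_smul, mul_smul, Finset.smul_sum]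
        have hsplit : phi0 (c • m) - c • phi0 m =
            (phi0 (c • m) - F (c • m) T) + c • (F m T - phi0 m) := by
          rw [hFsmul, smul_sub]; abel
        rw [hsplit]
        refine le_trans (hnmN.add_le _ _) (max_le ?_ ?_)
        · rw [hnmN.sub_comm]; exact h1
        · refine le_trans (hnmN.smul_le _ _) ?_
          calc v c * nmN (F m T - phi0 m) ≤ v c * (ε2 * C) :=
                mul_le_mul_of_nonneg_left h2 hvc.le
            _ = ε1 * C := by rw [hε2_def]; field_simp
            _ ≤ δ := by
                rw [hε1_def, div_mul_eq_mul_div, div_le_iff₀ (by positivity : (0:ℝ) < C + 1)]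
                nlinarith [hδ.le]
  set φ : M →ₗ[A] N := LinearMap.mk (AddHom.mk phi0 hadd) (fun c m => hsmul c m)
    with hφ_def
  -- norm bound
  have hbound : ∀ m, nmN (phi0 m) ≤ cstar * nmM m := by
    intro m
    refine le_of_forall_le_max (mul_nonneg hcstar0 (hnmM.nonneg m)) fun δ hδ => ?_
    set ε := δ / (cstar + 1) with hε_def
    have hε : 0 < ε := by rw [hε_def]; positivity
    set T := (hfin m ε hε).toFinset with hT_def
    have h1 : nmN (F m T - phi0 m) ≤ δ := by
      have h := approx cstar hcstar0 hcstarb m ε hε T fun i hi => by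
        simp only [hT_def, Set.Finite.mem_toFinset, Set.mem_setOf_eq]; exact hi
      refine le_trans h ?_
      rw [hε_def, div_mul_eq_mul_div, div_le_iff₀ (by positivity : (0:ℝ) < cstar + 1)]
      nlinarith [hδ.le]
    have h2 : nmN (F m T) ≤ cstar * nmM m := by
      rw [hF_def]
      refine hnmN.sum_le _ _ (mul_nonneg hcstar0 (hnmM.nonneg m)) fun i _ => ?_
      refine le_trans (hnmN.smul_le _ _) ?_
      have hvi : v (coefs m i) ≤ nmM m := by
        rw [hTM]
        exact v_le_cNorm (TM m) i
      calc v (coefs m i) * nmN (g i) ≤ nmM m * cstar :=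
            mul_le_mul hvi (hgle cstar hcstar0 hcstarb i) (hnmN.nonneg _) (hnmM.nonneg m)
        _ = cstar * nmM m := mul_comm _ _
    have hsplit : phi0 m = F m T - (F m T - phi0 m) := by abel
    rw [hsplit]
    exact le_trans (hnmN.sub_le _ _) (max_le_max h2 h1)
  -- matrix coefficients
  have hkey : ∀ i : I, phi0 (TM.symm (stdDelta v hv i)) = g i := by
    intro i
    have hco : ∀ k, coefs (TM.symm (stdDelta v hv i)) k = if k = i then 1 else 0 := by
      intro k
      rw [hcoefs_def]
      simp only [LinearEquiv.apply_symm_apply]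
      rfl
    have h := vanish (g i - phi0 (TM.symm (stdDelta v hv i))) fun δ hδ => ?_
    · exact (sub_eq_zero.mp h).symm
    · have hmem : ∀ k, δ / (C + 1) < v (coefs (TM.symm (stdDelta v hv i)) k) →
          k ∈ ({i} : Finset I) := by
        intro k hk
        rw [hco k] at hk
        by_contra hki
        rw [Finset.mem_singleton] at hki
        rw [if_neg hki, hv.map_zero] at hk
        exact absurd hk (not_lt.mpr (by positivity))
      have hFe : F (TM.symm (stdDelta v hv i)) ({i} : Finset I) = g i := by
        rw [hF_def]
        simp [hco]
      have h := approx' (TM.symm (stdDelta v hv i)) δ hδ {i} hmem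
      rwa [hFe] at h
  have hcoef : ∀ i j, matrixCoef v hv TM TN φ i j = a i j := by
    intro i j
    have h1 : φ (TM.symm (stdDelta v hv i)) = g i := hkey i
    simp only [matrixCoef, h1, hg_def, LinearEquiv.apply_symm_apply]
  -- uniqueness
  refine ⟨φ, hbound, hcoef, ?_⟩
  intro ψ hψc hψm m
  have hψg : ∀ i, ψ (TM.symm (stdDelta v hv i)) = g i := by
    intro i
    have h1 : TN (ψ (TM.symm (stdDelta v hv i))) = ⟨fun j => a i j, hdecay i⟩ := by
      apply Subtype.ext
      funext j
      exact hψm i j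
    calc ψ (TM.symm (stdDelta v hv i))
        = TN.symm (TN (ψ (TM.symm (stdDelta v hv i)))) := (TN.symm_apply_apply _).symm
      _ = TN.symm ⟨fun j => a i j, hdecay i⟩ := by rw [h1]
      _ = g i := rfl
  have h := vanish (ψ m - phi0 m) fun δ hδ => ?_
  · exact sub_eq_zero.mp h
  · obtain ⟨δ', hδ', Hc⟩ := hψc m δ hδ
    set ε := min (δ' / 2) (δ / (C + 1)) with hε_def
    have hε : 0 < ε := lt_min (by positivity) (by positivity)
    set T := (hfin m ε hε).toFinset with hT_def
    set mT : M := ∑ i ∈ T, coefs m i • (TM.symm (stdDelta v hv i)) with hmT_def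
    have hψmT : ψ mT = F m T := by
      rw [hmT_def, map_sum, hF_def]
      refine Finset.sum_congr rfl fun i _ => ?_
      rw [map_smul, hψg i]
    have hcoord : ∀ k, ((TM (mT - m) : cA v hv I) : I → A) k =
        (if k ∈ T then coefs m k else 0) - coefs m k := by
      intro k
      rw [map_sub, hmT_def, map_sum]
      have : ∀ i, TM (coefs m i • TM.symm (stdDelta v hv i)) = coefs m i • stdDelta v hv i := by
        intro i
        rw [map_smul, LinearEquiv.apply_symm_apply]
      simp only [this]
      have hcsum : ((∑ i ∈ T, coefs m i • stdDelta v hv i : cA v hv I) : I → A) k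
          = ∑ i ∈ T, coefs m i * (if k = i then 1 else 0) := by
        rw [AddSubmonoidClass.coe_finset_sum]
        rw [Finset.sum_apply]
        rfl
      show ((∑ i ∈ T, coefs m i • stdDelta v hv i : cA v hv I) : I → A) k
          - ((TM m : cA v hv I) : I → A) k = _
      rw [hcsum]
      simp only [mul_ite, mul_one, mul_zero, Finset.sum_ite_eq]
      rfl
    have hnear : nmM (mT - m) ≤ ε := by
      rw [hTM]
      refine cNorm_le _ hε.le fun k => ?_
      rw [hcoord k]
      by_cases hk : k ∈ T
      · rw [if_pos hk, sub_self, hv.map_zero]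
        exact hε.le
      · rw [if_neg hk, zero_sub, hv.map_neg]
        by_contra hlt
        refine hk ?_
        simp only [hT_def, Set.Finite.mem_toFinset, Set.mem_setOf_eq]
        exact not_le.mp hlt
    have hψclose : nmN (ψ mT - ψ m) < δ := by
      refine Hc mT (lt_of_le_of_lt hnear ?_)
      calc ε ≤ δ' / 2 := min_le_left _ _
        _ < δ' := by linarith
    have hFclose : nmN (F m T - phi0 m) ≤ δ := by
      have h := approx C hC0 hC m ε hε T fun i hi => by
        simp only [hT_def, Set.Finite.mem_toFinset, Set.mem_setOf_eq]; exact hi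
      refine le_trans h ?_
      calc ε * C ≤ (δ / (C + 1)) * C :=
            mul_le_mul_of_nonneg_right (min_le_right _ _) hC0
        _ ≤ δ := by
            rw [div_mul_eq_mul_div, div_le_iff₀ (by positivity : (0:ℝ) < C + 1)]
            nlinarith [hδ.le]
    have hsplit : ψ m - phi0 m = (ψ m - ψ mT) + (F m T - phi0 m) := by
      rw [← hψmT]; abel
    rw [hsplit]
    refine le_trans (hnmN.add_le _ _) (max_le ?_ hFclose)
    rw [hnmN.sub_comm]
    exact hψclose.le

end Construction
section OpNorm

set_option maxHeartbeats 1000000 in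
theorem opNorm_eq_of
    {A : Type u} [Ring A] (v : A → ℝ) (hA : IsBanachTate v)
    {M N : Type u} [AddCommGroup M] [Module A M] [AddCommGroup N] [Module A N]
    (nmM : M → ℝ) (hnmM : IsModuleNorm v nmM)
    (nmN : N → ℝ) (hnmN : IsModuleNorm v nmN)
    {I J : Type u}
    (TM : M ≃ₗ[A] cA v hA.isRingNorm I) (hTM : ∀ m : M, nmM m = cNorm v (TM m))
    (TN : N ≃ₗ[A] cA v hA.isRingNorm J) (hTN : ∀ x : N, nmN x = cNorm v (TN x))
    (a : I → J → A) (φ : M →ₗ[A] N)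
    (hb : ∀ m, nmN (φ m) ≤ (⨆ p : I × J, v (a p.1 p.2)) * nmM m)
    (hcoef : ∀ i j, matrixCoef v hA.isRingNorm TM TN φ i j = a i j) :
    opNorm nmM nmN φ = ⨆ p : I × J, v (a p.1 p.2) := by
  classical
  have hv := hA.isRingNorm
  set cstar : ℝ := ⨆ p : I × J, v (a p.1 p.2) with hcstar_def
  have hcstar0 : 0 ≤ cstar := Real.iSup_nonneg fun p => hv.nonneg _
  have hgoal : opNorm nmM nmN φ = sSup {r : ℝ | ∃ m : M, m ≠ 0 ∧ r = nmN (φ m) / nmM m} :=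
    rfl
  rw [hgoal]
  set S := {r : ℝ | ∃ m : M, m ≠ 0 ∧ r = nmN (φ m) / nmM m} with hS_def
  have hmemle : ∀ r ∈ S, r ≤ cstar := by
    rintro r ⟨m, hm, rfl⟩
    have hr : 0 < nmM m := by
      rcases lt_or_eq_of_le (hnmM.nonneg m) with h | h
      · exact h
      · exact absurd ((hnmM.eq_zero_iff m).mp h.symm) hm
    rw [div_le_iff₀ hr]
    exact hb m
  cases isEmpty_or_nonempty I with
  | inl hI =>
    have hM0 : ∀ m : M, m = 0 := by
      intro m
      have h : TM m = TM 0 := Subtype.ext (funext fun i => (hI.false i).elim)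
      exact TM.injective h
    have hSempty : S = ∅ := by
      ext r
      simp only [hS_def, Set.mem_setOf_eq, Set.mem_empty_iff_false, iff_false, not_exists]
      intro m hm
      exact absurd (hM0 m) hm.1.elim
    haveI : IsEmpty (I × J) := ⟨fun p => hI.false p.1⟩
    rw [hSempty, Real.sSup_empty, hcstar_def, Real.iSup_of_isEmpty]
  | inr hI =>
    have hbddS : BddAbove S := ⟨cstar, hmemle⟩
    have hlower : ∀ (i : I) (j : J), v (a i j) ≤ sSup S := by
      intro i j
      set e : M := TM.symm (stdDelta v hv i) with he_def
      have hne : e ≠ 0 := by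
        intro h
        apply stdDelta_ne_zero hv i
        rw [← TM.apply_symm_apply (stdDelta v hv i), ← he_def, h, map_zero]
      have hnm1 : nmM e = 1 := by
        rw [he_def, hTM, TM.apply_symm_apply, cNorm_stdDelta]
      have hval : v (a i j) ≤ nmN (φ e) := by
        rw [← hcoef i j, hTN]
        exact v_le_cNorm (TN (φ e)) j
      have hmem : nmN (φ e) / nmM e ∈ S := ⟨e, hne, rfl⟩
      have h := le_csSup hbddS hmem
      rw [hnm1, div_one] at h
      exact le_trans hval h
    refine le_antisymm (Real.sSup_le hmemle hcstar0) ?_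
    cases isEmpty_or_nonempty J with
    | inl hJ =>
      haveI : IsEmpty (I × J) := ⟨fun p => hJ.false p.2⟩
      rw [hcstar_def, Real.iSup_of_isEmpty]
      refine Real.sSup_nonneg fun x hx => ?_
      obtain ⟨m, hm, rfl⟩ := hx
      exact div_nonneg (hnmN.nonneg _) (hnmM.nonneg _)
    | inr hJ =>
      haveI : Nonempty (I × J) := ⟨(Classical.arbitrary I, Classical.arbitrary J)⟩
      rw [hcstar_def]
      exact ciSup_le fun p => hlower p.1 p.2

end OpNorm
/-- Matrices of continuous maps between ONable Banach modules over a
Banach–Tate ring: (i) the matrix of a continuous linear map has columns tending to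
zero, is bounded, and the operator norm is the sup of the matrix norms; (ii)
conversely any such family of coefficients is the matrix of a unique continuous
linear map, whose norm is the sup of the coefficient norms. -/
theorem matrix_correspondence
    {A : Type u} [Ring A] (v : A → ℝ) (hA : IsBanachTate v)
    {M N : Type u} [AddCommGroup M] [Module A M] [AddCommGroup N] [Module A N]
    (nmM : M → ℝ) (hnmM : IsModuleNorm v nmM) (hcompM : NormComplete nmM)
    (nmN : N → ℝ) (hnmN : IsModuleNorm v nmN) (hcompN : NormComplete nmN)
    {I J : Type u}
    (TM : M ≃ₗ[A] cA v hA.isRingNorm I) (hTM : ∀ m : M, nmM m = cNorm v (TM m))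
    (TN : N ≃ₗ[A] cA v hA.isRingNorm J) (hTN : ∀ x : N, nmN x = cNorm v (TN x)) :
    (∀ φ : M →ₗ[A] N, NormContinuous nmM nmN φ →
      (∀ i : I, ∀ ε : ℝ, 0 < ε →
        {j : J | ε < v (matrixCoef v hA.isRingNorm TM TN φ i j)}.Finite) ∧
      (∃ C : ℝ, ∀ (i : I) (j : J), v (matrixCoef v hA.isRingNorm TM TN φ i j) ≤ C) ∧
      opNorm nmM nmN φ =
        ⨆ p : I × J, v (matrixCoef v hA.isRingNorm TM TN φ p.1 p.2)) ∧
    (∀ a : I → J → A,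
      (∀ i : I, ∀ ε : ℝ, 0 < ε → {j : J | ε < v (a i j)}.Finite) →
      (∃ C : ℝ, ∀ (i : I) (j : J), v (a i j) ≤ C) →
      (∃! φ : M →ₗ[A] N, NormContinuous nmM nmN φ ∧
        ∀ (i : I) (j : J), matrixCoef v hA.isRingNorm TM TN φ i j = a i j) ∧
      (∀ φ : M →ₗ[A] N, NormContinuous nmM nmN φ →
        (∀ (i : I) (j : J), matrixCoef v hA.isRingNorm TM TN φ i j = a i j) →
        opNorm nmM nmN φ = ⨆ p : I × J, v (a p.1 p.2))) := by
  classical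
  constructor
  · intro φ hφ
    have hdec : ∀ i : I, ∀ ε : ℝ, 0 < ε →
        {j : J | ε < v (matrixCoef v hA.isRingNorm TM TN φ i j)}.Finite := by
      intro i ε hε
      exact (TN (φ (TM.symm (stdDelta v hA.isRingNorm i)))).2 ε hε
    obtain ⟨Cb, hCb0, hCb⟩ := bounded_of_normContinuous hA hnmM hnmN φ hφ
    have hnm1 : ∀ i : I, nmM (TM.symm (stdDelta v hA.isRingNorm i)) = 1 := fun i => by
      rw [hTM, TM.apply_symm_apply, cNorm_stdDelta]
    have hmatb : ∀ i j, v (matrixCoef v hA.isRingNorm TM TN φ i j) ≤ Cb := by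
      intro i j
      have h1 : v (matrixCoef v hA.isRingNorm TM TN φ i j) ≤
          cNorm v (TN (φ (TM.symm (stdDelta v hA.isRingNorm i)))) := v_le_cNorm _ j
      rw [← hTN] at h1
      refine le_trans h1 ?_
      have h2 := hCb (TM.symm (stdDelta v hA.isRingNorm i))
      rwa [hnm1 i, mul_one] at h2
    refine ⟨hdec, ⟨Cb, hmatb⟩, ?_⟩
    obtain ⟨φ₀, hb0, hcoef0, huniq0⟩ := matrix_construction v hA nmM hnmM nmN hnmN hcompN
      TM hTM TN hTN (fun i j => matrixCoef v hA.isRingNorm TM TN φ i j) hdec Cb hCb0 hmatb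
    have heq : ∀ m, φ m = φ₀ m := huniq0 φ hφ (fun i j => rfl)
    have hb : ∀ m, nmN (φ m) ≤
        (⨆ p : I × J, v (matrixCoef v hA.isRingNorm TM TN φ p.1 p.2)) * nmM m := by
      intro m
      rw [heq m]
      exact hb0 m
    exact opNorm_eq_of v hA nmM hnmM nmN hnmN TM hTM TN hTN _ φ hb (fun i j => rfl)
  · intro a hdec hCex
    obtain ⟨C, hCb⟩ := hCex
    have hC0 : (0:ℝ) ≤ max C 0 := le_max_right _ _
    have hCb' : ∀ i j, v (a i j) ≤ max C 0 := fun i j => le_trans (hCb i j) (le_max_left _ _)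
    obtain ⟨φ₀, hb0, hcoef0, huniq0⟩ := matrix_construction v hA nmM hnmM nmN hnmN hcompN
      TM hTM TN hTN a hdec (max C 0) hC0 hCb'
    have hcstar0 : (0:ℝ) ≤ ⨆ p : I × J, v (a p.1 p.2) :=
      Real.iSup_nonneg fun p => hA.isRingNorm.nonneg _
    have hφ₀c : NormContinuous nmM nmN φ₀ := normContinuous_of_bounded hnmN φ₀ hcstar0 hb0
    constructor
    · refine ⟨φ₀, ⟨hφ₀c, hcoef0⟩, ?_⟩
      intro ψ hψ
      exact LinearMap.ext fun m => huniq0 ψ hψ.1 hψ.2 m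
    · intro ψ hψc hψm
      have heq : ∀ m, ψ m = φ₀ m := huniq0 ψ hψc hψm
      have hfun : (⇑ψ : M → N) = ⇑φ₀ := funext heq
      calc opNorm nmM nmN ψ = opNorm nmM nmN φ₀ := by rw [hfun]
        _ = ⨆ p : I × J, v (a p.1 p.2) :=
            opNorm_eq_of v hA nmM hnmM nmN hnmN TM hTM TN hTN a φ₀ hb0 hcoef0
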